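/- Let (a₁, a₂, a₃) be a Markov triple. Then a₂ is invertible modulo a₁², and in ℤ/a₁²ℤ one has (a₃ · a₂⁻¹)² = 3 · a₁ · (a₃ · a₂⁻¹) − 1. -/

import Mathlib

/-- Hurwitz: the equation `x² + y² + z² = k·x·y·z` has no positive solutions for `k ≥ 5`. -/
lemma no_big_markov (k : ℕ) (hk : 5 ≤ k) :
    ∀ n x y z : ℕ, x + y + z = n → 0 < x → 0 < y → 0 < z →
      x ^ 2 + y ^ 2 + z ^ 2 = k * x * y * z → False := by
  intro n
  induction n using Nat.strong_induction_on with
  | _ n ih =>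
    have key : ∀ x y z : ℕ, x + y + z = n → 0 < x → 0 < y → 0 < z → z ≤ y → y ≤ x →
        x ^ 2 + y ^ 2 + z ^ 2 = k * x * y * z → False := by
      intro x y z hs hx hy hz hzy hyx he
      have hxlt : x < k * y * z := by nlinarith
      set w : ℕ := k * y * z - x with hw
      have hsum : w + x = k * y * z := by omega
      have hmul : w * x = y ^ 2 + z ^ 2 := by
        have h1 : (w + x) * x = k * y * z * x := by rw [hsum]
        nlinarith [h1, he]
      have hwpos : 0 < w := by
        rcases Nat.eq_zero_or_pos w with h0 | h0
        · rw [h0] at hmul; nlinarith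
        · exact h0
      have hne : w ^ 2 + y ^ 2 + z ^ 2 = k * w * y * z := by
        have h1 : w ^ 2 + (y ^ 2 + z ^ 2) = w * (w + x) := by rw [← hmul]; ring
        rw [hsum] at h1
        calc w ^ 2 + y ^ 2 + z ^ 2 = w ^ 2 + (y ^ 2 + z ^ 2) := by ring
          _ = w * (k * y * z) := h1
          _ = k * w * y * z := by ring
      by_cases hwx : w < x
      · exact ih (w + y + z) (by omega) w y z rfl hwpos hy hz hne
      · have hx2 : x ^ 2 ≤ y ^ 2 + z ^ 2 := by
          push_neg at hwx
          calc x ^ 2 = x * x := by ring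
            _ ≤ w * x := Nat.mul_le_mul_right x hwx
            _ = y ^ 2 + z ^ 2 := hmul
        have hz2 : z ^ 2 ≤ y ^ 2 := Nat.pow_le_pow_left hzy 2
        have hy1 : 1 ≤ y ^ 2 := Nat.one_le_pow _ _ hy
        have h5 : 5 * y ^ 2 ≤ k * x * y * z := by
          calc 5 * y ^ 2 = 5 * (y * (y * 1)) := by ring
            _ ≤ k * (x * (y * z)) :=
              Nat.mul_le_mul hk (Nat.mul_le_mul hyx (Nat.mul_le_mul le_rfl hz))
            _ = k * x * y * z := by ring
        linarith [he, hx2, hz2, hy1, h5]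
    intro x y z hs hx hy hz he
    rcases le_total x y with h1 | h1 <;> rcases le_total y z with h2 | h2 <;>
      rcases le_total x z with h3 | h3
    · exact key z y x (by omega) hz hy hx h1 h2 (by
        rw [show k * z * y * x = k * x * y * z by ring]; omega)
    · exact key z y x (by omega) hz hy hx h1 h2 (by
        rw [show k * z * y * x = k * x * y * z by ring]; omega)
    · exact key y z x (by omega) hy hz hx h3 h2 (by
        rw [show k * y * z * x = k * x * y * z by ring]; omega)
    · exact key y x z (by omega) hy hx hz h3 h1 (by
        rw [show k * y * x * z = k * x * y * z by ring]; omega)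
    · exact key z x y (by omega) hz hx hy h1 h3 (by
        rw [show k * z * x * y = k * x * y * z by ring]; omega)
    · exact key x z y (by omega) hx hz hy h2 h3 (by
        rw [show k * x * z * y = k * x * y * z by ring]; omega)
    · exact key x y z hs hx hy hz h2 h1 he
    · exact key x y z hs hx hy hz h2 h1 he

/-- Let `(a₁, a₂, a₃)` be a Markov triple. Then `a₂` is invertible modulo
`a₁²`, and in `ℤ/a₁²ℤ` one has `(a₃ · a₂⁻¹)² = 3 · a₁ · (a₃ · a₂⁻¹) − 1`. -/
theorem markov_wahl_congruence (a₁ a₂ a₃ : ℕ) (h₁ : 0 < a₁) (h₂ : 0 < a₂) (h₃ : 0 < a₃)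
    (h : a₁ ^ 2 + a₂ ^ 2 + a₃ ^ 2 = 3 * a₁ * a₂ * a₃) :
    IsUnit (a₂ : ZMod (a₁ ^ 2)) ∧
    ((a₃ : ZMod (a₁ ^ 2)) * (a₂ : ZMod (a₁ ^ 2))⁻¹) ^ 2 =
      3 * (a₁ : ZMod (a₁ ^ 2)) * ((a₃ : ZMod (a₁ ^ 2)) * (a₂ : ZMod (a₁ ^ 2))⁻¹) - 1 := by
  have hcop : Nat.Coprime a₂ a₁ := by
    by_contra hnc
    obtain ⟨p, hp, hpa₂, hpa₁⟩ := Nat.Prime.not_coprime_iff_dvd.mp hnc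
    have hpa₃ : p ∣ a₃ := by
      apply hp.dvd_of_dvd_pow (n := 2)
      have hid : a₃ ^ 2 = 3 * a₁ * a₂ * a₃ - a₁ ^ 2 - a₂ ^ 2 := by omega
      rw [hid]
      exact Nat.dvd_sub (Nat.dvd_sub
        (Dvd.dvd.mul_right (Dvd.dvd.mul_right (Dvd.dvd.mul_left hpa₁ 3) a₂) a₃)
        (dvd_pow hpa₁ two_ne_zero)) (dvd_pow hpa₂ two_ne_zero)
    obtain ⟨b₁, hb₁⟩ := hpa₁
    obtain ⟨b₂, hb₂⟩ := hpa₂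
    obtain ⟨b₃, hb₃⟩ := hpa₃
    have hppos : 0 < p := hp.pos
    have hb₁pos : 0 < b₁ := by
      rcases Nat.eq_zero_or_pos b₁ with h0 | h0
      · rw [h0, Nat.mul_zero] at hb₁; omega
      · exact h0
    have hb₂pos : 0 < b₂ := by
      rcases Nat.eq_zero_or_pos b₂ with h0 | h0
      · rw [h0, Nat.mul_zero] at hb₂; omega
      · exact h0
    have hb₃pos : 0 < b₃ := by
      rcases Nat.eq_zero_or_pos b₃ with h0 | h0
      · rw [h0, Nat.mul_zero] at hb₃; omega
      · exact h0
    have h2 : p ^ 2 * (b₁ ^ 2 + b₂ ^ 2 + b₃ ^ 2) = p ^ 2 * ((3 * p) * b₁ * b₂ * b₃) := by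
      calc p ^ 2 * (b₁ ^ 2 + b₂ ^ 2 + b₃ ^ 2)
          = (p * b₁) ^ 2 + (p * b₂) ^ 2 + (p * b₃) ^ 2 := by ring
        _ = 3 * (p * b₁) * (p * b₂) * (p * b₃) := by rw [← hb₁, ← hb₂, ← hb₃]; exact h
        _ = p ^ 2 * ((3 * p) * b₁ * b₂ * b₃) := by ring
    have heq : b₁ ^ 2 + b₂ ^ 2 + b₃ ^ 2 = (3 * p) * b₁ * b₂ * b₃ :=
      Nat.eq_of_mul_eq_mul_left (by positivity) h2
    have hk : 5 ≤ 3 * p := by have := hp.two_le; omega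
    exact no_big_markov (3 * p) hk (b₁ + b₂ + b₃) b₁ b₂ b₃ rfl hb₁pos hb₂pos hb₃pos heq
  haveI : NeZero (a₁ ^ 2) := ⟨by positivity⟩
  have hu : IsUnit (a₂ : ZMod (a₁ ^ 2)) :=
    (ZMod.isUnit_iff_coprime a₂ (a₁ ^ 2)).mpr (hcop.pow_right 2)
  refine ⟨hu, ?_⟩
  set u := (a₂ : ZMod (a₁ ^ 2))⁻¹ with hu_def
  have hmu : (a₂ : ZMod (a₁ ^ 2)) * u = 1 := ZMod.mul_inv_of_unit _ hu
  have h0 : ((a₁ : ZMod (a₁ ^ 2))) ^ 2 = 0 := by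
    have : ((a₁ ^ 2 : ℕ) : ZMod (a₁ ^ 2)) = 0 := ZMod.natCast_self _
    push_cast at this
    exact this
  have hE : (a₁ : ZMod (a₁ ^ 2)) ^ 2 + (a₂ : ZMod (a₁ ^ 2)) ^ 2 + (a₃ : ZMod (a₁ ^ 2)) ^ 2 =
      3 * (a₁ : ZMod (a₁ ^ 2)) * (a₂ : ZMod (a₁ ^ 2)) * (a₃ : ZMod (a₁ ^ 2)) := by
    exact_mod_cast congrArg (Nat.cast : ℕ → ZMod (a₁ ^ 2)) h
  linear_combination u ^ 2 * hE - u ^ 2 * h0 +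
    (3 * (a₁ : ZMod (a₁ ^ 2)) * (a₃ : ZMod (a₁ ^ 2)) * u - (a₂ : ZMod (a₁ ^ 2)) * u - 1) * hmu
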